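/- Let l ≥ 2 and consider the (2l+1)-partite graph G with vertex classes X_1,…,X_{2l+1}, each a copy of {1,…,n}, where for each i ≠ 1,3 every vertex of X_i is joined to every vertex of X_{i+1} (indices mod 2l+1), each x ∈ X_1 is joined only to its copy x ∈ X_2, and each x ∈ X_3 is joined only to its copy x ∈ X_4. Give colour 1 to all edges between X_1,X_2 and between X_3,X_4, and distinct new colours to all other edges. Then this colouring is a proper edge-colouring, G has (2l+1)n vertices, G contains at least n^{2l−1} cycles of length 2l+1, and no cycle of G that uses an edge between every consecutive pair of classes is rainbow. -/

import Mathlib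

open SimpleGraph

/-- A colouring of (potential) edges is proper on `G` if no two distinct edges of `G`
sharing a vertex receive the same colour. -/
def ProperColoring {V γ : Type*} (G : SimpleGraph V) (c : Sym2 V → γ) : Prop :=
  ∀ e f : Sym2 V, e ∈ G.edgeSet → f ∈ G.edgeSet → e ≠ f → (∃ v, v ∈ e ∧ v ∈ f) → c e ≠ c f

/-- `G` (with colouring `c`) contains a rainbow cycle of length `t`. -/
def HasRainbowCycle {V γ : Type*} (G : SimpleGraph V) (c : Sym2 V → γ) (t : ℕ) : Prop :=
  ∃ (u : V) (w : G.Walk u u), w.IsCycle ∧ w.length = t ∧ (w.edges.map c).Nodup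

/-- The oriented edge relation of the `(2l+1)`-partite construction: class `i` is joined
to class `i+1` (mod `2l+1`), completely except that between classes `0,1` (i.e. `X₁,X₂`)
and between classes `2,3` (i.e. `X₃,X₄`) only the perfect matching `x ↦ x` is present. -/
def oddConsRel (l n : ℕ) (u v : Fin (2 * l + 1) × Fin n) : Prop :=
  v.1 = u.1 + 1 ∧ ((u.1 = 0 ∨ u.1 = 2) → u.2 = v.2)

/-- The `(2l+1)`-partite graph of the construction. -/
def oddConsGraph (l n : ℕ) : SimpleGraph (Fin (2 * l + 1) × Fin n) where
  Adj u v := u ≠ v ∧ (oddConsRel l n u v ∨ oddConsRel l n v u)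
  symm := by constructor; intro u v h; exact ⟨h.1.symm, h.2.symm⟩
  loopless := by constructor; intro u h; exact h.1 rfl

/-- A pair is a matching edge (colour 1 in the paper) iff it joins classes `0,1` or
classes `2,3` and has equal second coordinates. -/
def IsMatchEdge (l n : ℕ) (e : Sym2 (Fin (2 * l + 1) × Fin n)) : Prop :=
  ∃ u v : Fin (2 * l + 1) × Fin n, e = s(u, v) ∧ v.1 = u.1 + 1 ∧
    (u.1 = 0 ∨ u.1 = 2) ∧ u.2 = v.2

open Classical in
/-- The colouring: all matching edges get one common colour (`none`), and every other
pair gets its own colour (`some` of itself), i.e. pairwise distinct fresh colours. -/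
noncomputable def oddConsCol (l n : ℕ) :
    Sym2 (Fin (2 * l + 1) × Fin n) → Option (Sym2 (Fin (2 * l + 1) × Fin n)) :=
  fun e => if IsMatchEdge l n e then none else some e

-- val lemmas
lemma vv1 (l : ℕ) (hl : 2 ≤ l) : ((1 : Fin (2*l+1)) : ℕ) = 1 := by
  have : (1 : Fin (2*l+1)) = Fin.ofNat _ 1 := rfl
  rw [this, Fin.val_ofNat]; exact Nat.mod_eq_of_lt (by omega)
lemma vv2 (l : ℕ) (hl : 2 ≤ l) : ((2 : Fin (2*l+1)) : ℕ) = 2 := by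
  have : (2 : Fin (2*l+1)) = Fin.ofNat _ 2 := rfl
  rw [this, Fin.val_ofNat]; exact Nat.mod_eq_of_lt (by omega)
lemma vv3 (l : ℕ) (hl : 2 ≤ l) : ((3 : Fin (2*l+1)) : ℕ) = 3 := by
  have : (3 : Fin (2*l+1)) = Fin.ofNat _ 3 := rfl
  rw [this, Fin.val_ofNat]; exact Nat.mod_eq_of_lt (by omega)

lemma vadd (l : ℕ) (i : Fin (2*l+1)) (hl : 2 ≤ l) (h : i.val + 1 < 2*l+1) :
    ((i + 1 : Fin (2*l+1)) : ℕ) = i.val + 1 := by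
  rw [Fin.val_add, vv1 l hl]; exact Nat.mod_eq_of_lt h

lemma match_vals {l n : ℕ} (hl : 2 ≤ l) {u v : Fin (2*l+1) × Fin n}
    (h1 : v.1 = u.1 + 1) (h2 : u.1 = 0 ∨ u.1 = 2) :
    (u.1.val = 0 ∧ v.1.val = 1) ∨ (u.1.val = 2 ∧ v.1.val = 3) := by
  rcases h2 with h | h
  · left
    have hu : u.1.val = 0 := by rw [h]; rfl
    refine ⟨hu, ?_⟩
    rw [h1, vadd l u.1 hl (by omega), hu]
  · right
    have hu : u.1.val = 2 := by rw [h]; exact vv2 l hl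
    refine ⟨hu, ?_⟩
    rw [h1, vadd l u.1 hl (by omega), hu]

lemma match_unique {l n : ℕ} (hl : 2 ≤ l) {e f : Sym2 (Fin (2*l+1) × Fin n)}
    (he : IsMatchEdge l n e) (hf : IsMatchEdge l n f) {v : Fin (2*l+1) × Fin n}
    (hv : v ∈ e) (hw : v ∈ f) : e = f := by
  obtain ⟨u1, w1, rfl, e1, e2, e3⟩ := he
  obtain ⟨u2, w2, rfl, f1, f2, f3⟩ := hf
  have hw1 : w1 = (u1.1 + 1, u1.2) := by
    apply Prod.ext
    · exact e1
    · exact e3.symm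
  have hw2 : w2 = (u2.1 + 1, u2.2) := by
    apply Prod.ext
    · exact f1
    · exact f3.symm
  have hv1 := match_vals hl e1 e2
  have hv2 := match_vals hl f1 f2
  rw [Sym2.mem_iff] at hv hw
  rcases hv with rfl | rfl <;> rcases hw with h | h
  · rw [h, hw1, hw2, h]
  · exfalso; rw [← h] at hv2; omega
  · exfalso; rw [← h] at hv2; omega
  · -- w1 = w2
    have hu : u1 = u2 := by
      apply Prod.ext
      · have : u1.1 + 1 = u2.1 + 1 := by rw [← e1, h, f1]
        exact add_right_cancel this
      · rw [e3, f3, ← h]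
    rw [hu, hw1, hw2, hu]

lemma aux_part3 (l n : ℕ) (hl : 2 ≤ l) :
    n ^ (2 * l - 1) ≤
      {x : Fin (2 * l + 1) → Fin (2 * l + 1) × Fin n | Function.Injective x ∧
        ∀ i, (oddConsGraph l n).Adj (x i) (x (i + 1))}.ncard := by
  classical
  set S := {x : Fin (2 * l + 1) → Fin (2 * l + 1) × Fin n | Function.Injective x ∧
        ∀ i, (oddConsGraph l n).Adj (x i) (x (i + 1))} with hS
  set F : (Fin (2*l-1) → Fin n) → (Fin (2*l+1) → Fin (2*l+1) × Fin n) :=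
    fun f i => (i, f ⟨if i.val ≤ 1 then 0 else if i.val ≤ 3 then 1 else i.val - 2,
      by have := i.isLt; split_ifs <;> omega⟩) with hF
  have hsurj : ∀ j : Fin (2*l-1), ∃ i : Fin (2*l+1),
      ∀ f : Fin (2*l-1) → Fin n, (F f i).2 = f j := by
    intro j
    have hj := j.isLt
    refine ⟨⟨if j.val = 0 then 0 else if j.val = 1 then 2 else j.val + 2,
      by split_ifs <;> omega⟩, ?_⟩
    intro f
    simp only [hF]
    congr 1
    apply Fin.ext
    simp only []
    split_ifs <;> omega
  have hFinj : Function.Injective F := by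
    intro f g h
    funext j
    obtain ⟨i, hi⟩ := hsurj j
    rw [← hi f, ← hi g, h]
  have hsub : Set.range F ⊆ S := by
    rintro _ ⟨f, rfl⟩
    constructor
    · intro a b hab
      exact congrArg Prod.fst hab
    · intro i
      have hlt := i.isLt
      refine ⟨?_, Or.inl ⟨rfl, ?_⟩⟩
      · intro hcontra
        have h1 : i = i + 1 := congrArg Prod.fst hcontra
        have h2 : (1 : Fin (2*l+1)) = 0 := by
          have := left_eq_add.mp h1
          exact this
        have := congrArg Fin.val h2
        rw [vv1 l hl] at this
        simp at this
      · intro h02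
        change i = 0 ∨ i = 2 at h02
        have hv : i.val = 0 ∨ i.val = 2 := by
          rcases h02 with h | h
          · left; rw [h]; rfl
          · right; rw [h]; exact vv2 l hl
        have hva : ((i + 1 : Fin (2*l+1)) : ℕ) = i.val + 1 :=
          vadd l i hl (by omega)
        simp only [hF]
        congr 1
        apply Fin.ext
        simp only []
        rw [hva]
        split_ifs <;> omega
  have hcard : Nat.card (Fin (2*l-1) → Fin n) = n ^ (2*l-1) := by
    simp [Nat.card_eq_fintype_card]
  rw [← hcard, ← Nat.card_range_of_injective hFinj, Nat.card_coe_set_eq]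
  exact Set.ncard_le_ncard hsub (Set.toFinite _)

lemma aux_part1 (l n : ℕ) (hl : 2 ≤ l) :
    ∀ e f : Sym2 (Fin (2*l+1) × Fin n), e ∈ (oddConsGraph l n).edgeSet →
      f ∈ (oddConsGraph l n).edgeSet → e ≠ f → (∃ v, v ∈ e ∧ v ∈ f) →
      oddConsCol l n e ≠ oddConsCol l n f := by
  intro e f _ _ hne ⟨v, hv1, hv2⟩
  unfold oddConsCol
  by_cases h1 : IsMatchEdge l n e <;> by_cases h2 : IsMatchEdge l n f <;>
    simp [h1, h2]
  · exact absurd (match_unique hl h1 h2 hv1 hv2) hne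
  · exact hne

lemma aux_part4 (l n : ℕ) (hl : 2 ≤ l)
    (u : Fin (2 * l + 1) × Fin n) (w : (oddConsGraph l n).Walk u u)
    (hall : ∀ i : Fin (2 * l + 1), ∃ e ∈ w.edges, ∃ a b : Fin (2 * l + 1) × Fin n,
        e = s(a, b) ∧ a.1 = i ∧ b.1 = i + 1) :
    ¬ (w.edges.map (oddConsCol l n)).Nodup := by
  intro hnodup
  obtain ⟨e, he, a, b, rfl, ha, hb⟩ := hall 0
  obtain ⟨f, hf, a', b', rfl, ha', hb'⟩ := hall 2
  have hab : b.1 = a.1 + 1 := by rw [ha, hb]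
  have hab' : b'.1 = a'.1 + 1 := by rw [ha', hb']
  -- matching edges
  have hadj : (oddConsGraph l n).Adj a b := (w.edges_subset_edgeSet he)
  have hadj' : (oddConsGraph l n).Adj a' b' := (w.edges_subset_edgeSet hf)
  have hva : a.1.val = 0 := by rw [ha]; rfl
  have hvb : b.1.val = 1 := by rw [hab, vadd l a.1 hl (by omega), hva]
  have hva' : a'.1.val = 2 := by rw [ha']; exact vv2 l hl
  have hvb' : b'.1.val = 3 := by rw [hab', vadd l a'.1 hl (by omega), hva']
  have hme : IsMatchEdge l n s(a, b) := by
    refine ⟨a, b, rfl, hab, Or.inl ha, ?_⟩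
    rcases hadj.2 with hr | hr
    · exact hr.2 (Or.inl ha)
    · exfalso
      have := hr.1  -- a.1 = b.1 + 1
      have hv := congrArg Fin.val this
      rw [hva, vadd l b.1 hl (by omega), hvb] at hv
      omega
  have hmf : IsMatchEdge l n s(a', b') := by
    refine ⟨a', b', rfl, hab', Or.inr ha', ?_⟩
    rcases hadj'.2 with hr | hr
    · exact hr.2 (Or.inr ha')
    · exfalso
      have := hr.1
      have hv := congrArg Fin.val this
      rw [hva', vadd l b'.1 hl (by omega), hvb'] at hv
      omega
  have hne : s(a, b) ≠ s(a', b') := by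
    intro h
    rw [Sym2.eq_iff] at h
    rcases h with ⟨h1, _⟩ | ⟨h1, _⟩
    · have := congrArg (Fin.val ∘ Prod.fst) h1
      simp only [Function.comp] at this
      omega
    · have := congrArg (Fin.val ∘ Prod.fst) h1
      simp only [Function.comp] at this
      omega
  exact hne (List.inj_on_of_nodup_map hnodup he hf
    (by simp [oddConsCol, hme, hmf]))

/-- the `(2l+1)`-partite construction is properly edge-coloured, has
`(2l+1)·n` vertices, contains at least `n^{2l-1}` cycles of length `2l+1` (counted here
as injective cyclic vertex sequences), and no cycle of it using an edge between every
consecutive pair of classes is rainbow. -/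
theorem odd_cycle_construction (l n : ℕ) (hl : 2 ≤ l) :
    ProperColoring (oddConsGraph l n) (oddConsCol l n) ∧
    Fintype.card (Fin (2 * l + 1) × Fin n) = (2 * l + 1) * n ∧
    n ^ (2 * l - 1) ≤
      {x : Fin (2 * l + 1) → Fin (2 * l + 1) × Fin n | Function.Injective x ∧
        ∀ i, (oddConsGraph l n).Adj (x i) (x (i + 1))}.ncard ∧
    ∀ (u : Fin (2 * l + 1) × Fin n) (w : (oddConsGraph l n).Walk u u), w.IsCycle →
      (∀ i : Fin (2 * l + 1), ∃ e ∈ w.edges, ∃ a b : Fin (2 * l + 1) × Fin n,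
        e = s(a, b) ∧ a.1 = i ∧ b.1 = i + 1) →
      ¬ (w.edges.map (oddConsCol l n)).Nodup := by
  exact ⟨aux_part1 l n hl, by simp, aux_part3 l n hl,
    fun u w _ hall => aux_part4 l n hl u w hall⟩
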